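/- (2-Route 2-Bus system: no type P-T and no type P-P Braess' paradox.) For α₁, α₂, ρ, f̄ > 0 define S := α₁ + α₂ + 2ρ², x₁ := (α₂ + ρ² − 2ρf̄)/S, x₂ := 1 − x₁, λ₁ := ρx₁ + f̄, λ₂ := ρx₂ − f̄, Φ_T := α₁x₁² + α₂x₂², and Φ_P := (1/2)(λ₁² + λ₂²). Assume x₁ > 0 and the congestion condition ρ(x₂ − x₁) > 2f̄. Then both partial derivatives with respect to f̄ are strictly negative: ∂Φ_T/∂f̄ < 0 and ∂Φ_P/∂f̄ < 0. Hence increasing the power line capacity strictly decreases both the transportation and the power system social costs: type P-T and type P-P Braess' paradoxes never occur for the 2-Route 2-Bus coupled network. -/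

import Mathlib

/-- 2-Route 2-Bus coupled system with congested power line: the partial derivatives of
both the transportation social cost `Φ_T` and the power system social cost `Φ_P` with
respect to the line capacity `f̄` are strictly negative, so neither a type P-T nor a
type P-P Braess' paradox ever occurs. -/
theorem two_route_two_bus_no_PT_no_PP
    (α₁ α₂ ρ fb : ℝ) (h1 : 0 < α₁) (h2 : 0 < α₂) (hρ : 0 < ρ) (hf : 0 < fb)
    (S x₁ x₂ l₁ l₂ : ℝ)
    (hS : S = α₁ + α₂ + 2 * ρ ^ 2)
    (hx₁ : x₁ = (α₂ + ρ ^ 2 - 2 * ρ * fb) / S)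
    (hx₂ : x₂ = 1 - x₁)
    (hl₁ : l₁ = ρ * x₁ + fb) (hl₂ : l₂ = ρ * x₂ - fb)
    (hx₁pos : 0 < x₁) (hcong : 2 * fb < ρ * (x₂ - x₁)) :
    ∃ D₁ D₂ : ℝ,
      HasDerivAt
        (fun b : ℝ =>
          α₁ * ((α₂ + ρ ^ 2 - 2 * ρ * b) / (α₁ + α₂ + 2 * ρ ^ 2)) ^ 2 +
            α₂ * (1 - (α₂ + ρ ^ 2 - 2 * ρ * b) / (α₁ + α₂ + 2 * ρ ^ 2)) ^ 2)
        D₁ fb ∧ D₁ < 0 ∧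
      HasDerivAt
        (fun b : ℝ =>
          (1 / 2) *
            ((ρ * ((α₂ + ρ ^ 2 - 2 * ρ * b) / (α₁ + α₂ + 2 * ρ ^ 2)) + b) ^ 2 +
              (ρ * (1 - (α₂ + ρ ^ 2 - 2 * ρ * b) / (α₁ + α₂ + 2 * ρ ^ 2)) - b) ^ 2))
        D₂ fb ∧ D₂ < 0 := by
  have hSpos : 0 < α₁ + α₂ + 2 * ρ ^ 2 := by positivity
  have hS0 : (α₁ + α₂ + 2 * ρ ^ 2) ≠ 0 := ne_of_gt hSpos
  have hufb : (α₂ + ρ ^ 2 - 2 * ρ * fb) / (α₁ + α₂ + 2 * ρ ^ 2) = x₁ := by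
    rw [hx₁, hS]
  have hx₁S : x₁ * (α₁ + α₂ + 2 * ρ ^ 2) = α₂ + ρ ^ 2 - 2 * ρ * fb := by
    rw [← hufb]; field_simp
  -- derivative of the inner function u
  have hu : HasDerivAt
      (fun b : ℝ => (α₂ + ρ ^ 2 - 2 * ρ * b) / (α₁ + α₂ + 2 * ρ ^ 2))
      (-(2 * ρ) / (α₁ + α₂ + 2 * ρ ^ 2)) fb := by
    have h : HasDerivAt (fun b : ℝ => α₂ + ρ ^ 2 - 2 * ρ * b) (-(2 * ρ)) fb := by
      simpa using ((hasDerivAt_id fb).const_mul (2 * ρ)).const_sub (α₂ + ρ ^ 2)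
    exact h.div_const _
  set u' : ℝ := -(2 * ρ) / (α₁ + α₂ + 2 * ρ ^ 2) with hu'
  have hu'neg : u' < 0 := div_neg_of_neg_of_pos (by linarith) hSpos
  -- key sign facts
  have hkey : α₂ * x₂ - α₁ * x₁ < 0 := by
    nlinarith [hx₁S, hx₂, hcong, hρ.le, mul_pos hρ (sub_pos.mpr hcong)]
  have hlkey : (ρ * x₁ + fb) - (ρ * x₂ - fb) < 0 := by nlinarith
  refine ⟨α₁ * ((2 : ℕ) * (x₁ : ℝ) ^ 1 * u') + α₂ * ((2 : ℕ) * (1 - x₁) ^ 1 * (0 - u')),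
    (1 / 2) * (((2 : ℕ) * (ρ * x₁ + fb) ^ 1 * (ρ * u' + 1)) +
      ((2 : ℕ) * (ρ * x₂ - fb) ^ 1 * (ρ * (0 - u') - 1))), ?_, ?_, ?_, ?_⟩
  · have hT := ((hu.pow 2).const_mul α₁).add (((hu.const_sub 1).pow 2).const_mul α₂)
    convert hT using 2 <;> first | rfl | simp [hufb]
  · have heq : α₁ * ((2 : ℕ) * x₁ ^ 1 * u') + α₂ * ((2 : ℕ) * (1 - x₁) ^ 1 * (0 - u'))
        = 2 * u' * (α₁ * x₁ - α₂ * x₂) := by rw [hx₂]; push_cast; ring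
    rw [heq]
    nlinarith
  · have hL1 : HasDerivAt
        (fun b : ℝ => ρ * ((α₂ + ρ ^ 2 - 2 * ρ * b) / (α₁ + α₂ + 2 * ρ ^ 2)) + b)
        (ρ * u' + 1) fb := by
      exact (hu.const_mul ρ).add (hasDerivAt_id' fb)
    have hL2 : HasDerivAt
        (fun b : ℝ => ρ * (1 - (α₂ + ρ ^ 2 - 2 * ρ * b) / (α₁ + α₂ + 2 * ρ ^ 2)) - b)
        (ρ * (0 - u') - 1) fb := by
      exact (((hu.const_sub 1).const_mul ρ).sub (hasDerivAt_id' fb)).congr_deriv (by ring)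
    have hP := ((hL1.pow 2).add (hL2.pow 2)).const_mul (1 / 2 : ℝ)
    convert hP using 1 <;> first | rfl | rw [hx₂, hufb]
  · have hc : ρ * u' + 1 = (α₁ + α₂) / (α₁ + α₂ + 2 * ρ ^ 2) := by
      rw [hu']; field_simp; ring
    have hcpos : 0 < ρ * u' + 1 := by
      rw [hc]; positivity
    have heq : (1 / 2 : ℝ) * (((2 : ℕ) * (ρ * x₁ + fb) ^ 1 * (ρ * u' + 1)) +
        ((2 : ℕ) * (ρ * x₂ - fb) ^ 1 * (ρ * (0 - u') - 1)))
        = (ρ * u' + 1) * ((ρ * x₁ + fb) - (ρ * x₂ - fb)) := by push_cast; ring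
    rw [heq]
    nlinarith
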